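/- The strong resolving graph of the n×m grid (n,m ≥ 2) has exactly two edges: {x_{1,1}, x_{n,m}} and {x_{1,m}, x_{n,1}}; consequently the strong metric dimension of the grid is 2. -/

import Mathlib

open SimpleGraph

/-- `y` is maximally distant from `x` in `G`: no neighbor of `y` is farther from `x` than `y`. -/
def MaxDistantFrom {V : Type*} (G : SimpleGraph V) (y x : V) : Prop :=
  ∀ z, G.Adj y z → G.dist z x ≤ G.dist y x

/-- `u` and `v` are mutually maximally distant in `G`. -/
def MutuallyMaxDistant {V : Type*} (G : SimpleGraph V) (u v : V) : Prop :=
  MaxDistantFrom G u v ∧ MaxDistantFrom G v u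

/-- The strong resolving graph of `G`: edges are the mutually maximally distant pairs. -/
def srGraph {V : Type*} (G : SimpleGraph V) : SimpleGraph V where
  Adj u v := u ≠ v ∧ MutuallyMaxDistant G u v
  symm := ⟨fun u v h => ⟨h.1.symm, h.2.2, h.2.1⟩⟩
  loopless := ⟨fun u h => h.1 rfl⟩

/-- `w` strongly resolves `u` and `v`: `v` lies on a shortest `w`–`u` path, or
`u` lies on a shortest `w`–`v` path. -/
def StronglyResolves {V : Type*} (G : SimpleGraph V) (w u v : V) : Prop :=
  G.dist w v + G.dist v u = G.dist w u ∨ G.dist w u + G.dist u v = G.dist w v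

/-- `R` is a strong resolving set for `G`. -/
def StrongResolvingSet {V : Type*} (G : SimpleGraph V) (R : Set V) : Prop :=
  ∀ u v : V, u ≠ v → ∃ w ∈ R, StronglyResolves G w u v
/-- The `n × m` grid graph: vertices `(i, j)` with `0 ≤ i < n`, `0 ≤ j < m`,
adjacent iff at Manhattan distance `1`. -/
def gridGraph (n m : ℕ) : SimpleGraph (Fin n × Fin m) :=
  SimpleGraph.fromRel (fun a b => Nat.dist a.1.1 b.1.1 + Nat.dist a.2.1 b.2.1 = 1)


lemma grid_adj {n m : ℕ} {a b : Fin n × Fin m} :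
    (gridGraph n m).Adj a b ↔ Nat.dist a.1.1 b.1.1 + Nat.dist a.2.1 b.2.1 = 1 := by
  unfold gridGraph
  rw [SimpleGraph.fromRel_adj]
  constructor
  · rintro ⟨-, h | h⟩
    · exact h
    · rwa [Nat.dist_comm b.1.1, Nat.dist_comm b.2.1] at h
  · intro h
    refine ⟨?_, Or.inl h⟩
    rintro rfl
    simp [Nat.dist_self] at h

lemma grid_walk {n m : ℕ} : ∀ (k : ℕ) (a b : Fin n × Fin m),
    Nat.dist a.1.1 b.1.1 + Nat.dist a.2.1 b.2.1 = k →
    ∃ p : (gridGraph n m).Walk a b, p.length = k := by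
  intro k
  induction k with
  | zero =>
    intro a b h
    have h1 : a.1.1 = b.1.1 ∧ a.2.1 = b.2.1 := by simp [Nat.dist] at h ⊢; omega
    have : a = b := by
      ext
      · exact h1.1
      · exact h1.2
    subst this
    exact ⟨.nil, rfl⟩
  | succ k ih =>
    intro a b h
    rcases Nat.lt_trichotomy a.1.1 b.1.1 with h1 | h1 | h1
    · have hlt : a.1.1 + 1 < n := lt_of_le_of_lt h1 b.1.2
      set c : Fin n × Fin m := (⟨a.1.1 + 1, hlt⟩, a.2) with hc
      have hadj : (gridGraph n m).Adj a c := by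
        rw [grid_adj]; simp [hc, Nat.dist]; try omega
      obtain ⟨p, hp⟩ := ih c b (by simp [hc, Nat.dist] at h ⊢; try omega)
      exact ⟨.cons hadj p, by simp [hp]⟩
    · rcases Nat.lt_trichotomy a.2.1 b.2.1 with h2 | h2 | h2
      · have hlt : a.2.1 + 1 < m := lt_of_le_of_lt h2 b.2.2
        set c : Fin n × Fin m := (a.1, ⟨a.2.1 + 1, hlt⟩) with hc
        have hadj : (gridGraph n m).Adj a c := by
          rw [grid_adj]; simp [hc, Nat.dist]; try omega
        obtain ⟨p, hp⟩ := ih c b (by simp [hc, Nat.dist] at h ⊢; try omega)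
        exact ⟨.cons hadj p, by simp [hp]⟩
      · exfalso; simp [Nat.dist] at h; omega
      · have hlt : a.2.1 - 1 < m := lt_of_le_of_lt (by omega) a.2.2
        set c : Fin n × Fin m := (a.1, ⟨a.2.1 - 1, hlt⟩) with hc
        have hadj : (gridGraph n m).Adj a c := by
          rw [grid_adj]; simp [hc, Nat.dist]; try omega
        obtain ⟨p, hp⟩ := ih c b (by simp [hc, Nat.dist] at h ⊢; try omega)
        exact ⟨.cons hadj p, by simp [hp]⟩
    · have hlt : a.1.1 - 1 < n := lt_of_le_of_lt (by omega) a.1.2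
      set c : Fin n × Fin m := (⟨a.1.1 - 1, hlt⟩, a.2) with hc
      have hadj : (gridGraph n m).Adj a c := by
        rw [grid_adj]; simp [hc, Nat.dist]; try omega
      obtain ⟨p, hp⟩ := ih c b (by simp [hc, Nat.dist] at h ⊢; try omega)
      exact ⟨.cons hadj p, by simp [hp]⟩

lemma grid_walk_ge {n m : ℕ} {a b : Fin n × Fin m} (p : (gridGraph n m).Walk a b) :
    Nat.dist a.1.1 b.1.1 + Nat.dist a.2.1 b.2.1 ≤ p.length := by
  induction p with
  | nil => simp [Nat.dist_self]
  | @cons u c w h p ih =>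
    rw [grid_adj] at h
    rw [SimpleGraph.Walk.length_cons]
    simp only [Nat.dist] at *
    omega

lemma grid_dist {n m : ℕ} (a b : Fin n × Fin m) :
    (gridGraph n m).dist a b = Nat.dist a.1.1 b.1.1 + Nat.dist a.2.1 b.2.1 := by
  obtain ⟨p, hp⟩ := grid_walk _ a b rfl
  refine le_antisymm (hp ▸ SimpleGraph.dist_le p) ?_
  obtain ⟨q, hq⟩ := SimpleGraph.Reachable.exists_walk_length_eq_dist ⟨p⟩
  exact hq ▸ grid_walk_ge q

lemma maxDistant_iff {n m : ℕ} (hn : 2 ≤ n) (hm : 2 ≤ m) (u v : Fin n × Fin m) :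
    MaxDistantFrom (gridGraph n m) u v ↔
    ((u.1.1 = 0 ∧ v.1.1 ≠ 0) ∨ (u.1.1 = n - 1 ∧ v.1.1 ≠ n - 1)) ∧
    ((u.2.1 = 0 ∧ v.2.1 ≠ 0) ∨ (u.2.1 = m - 1 ∧ v.2.1 ≠ m - 1)) := by
  have hu1 := u.1.2; have hu2 := u.2.2; have hv1 := v.1.2; have hv2 := v.2.2
  constructor
  · intro h
    have H : ∀ z : Fin n × Fin m, (gridGraph n m).Adj u z →
        Nat.dist z.1.1 v.1.1 + Nat.dist z.2.1 v.2.1 ≤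
        Nat.dist u.1.1 v.1.1 + Nat.dist u.2.1 v.2.1 := by
      intro z hz
      have := h z hz
      rwa [grid_dist, grid_dist] at this
    have A1 : u.1.1 = n - 1 ∨
        Nat.dist (u.1.1 + 1) v.1.1 + Nat.dist u.2.1 v.2.1 ≤
        Nat.dist u.1.1 v.1.1 + Nat.dist u.2.1 v.2.1 := by
      by_cases hlt : u.1.1 + 1 < n
      · exact Or.inr (H (⟨u.1.1 + 1, hlt⟩, u.2) (by rw [grid_adj]; simp [Nat.dist]))
      · left; omega
    have A2 : u.1.1 = 0 ∨
        Nat.dist (u.1.1 - 1) v.1.1 + Nat.dist u.2.1 v.2.1 ≤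
        Nat.dist u.1.1 v.1.1 + Nat.dist u.2.1 v.2.1 := by
      by_cases hlt : 0 < u.1.1
      · exact Or.inr (H (⟨u.1.1 - 1, by omega⟩, u.2)
          (by rw [grid_adj]; simp [Nat.dist]; omega))
      · left; omega
    have A3 : u.2.1 = m - 1 ∨
        Nat.dist u.1.1 v.1.1 + Nat.dist (u.2.1 + 1) v.2.1 ≤
        Nat.dist u.1.1 v.1.1 + Nat.dist u.2.1 v.2.1 := by
      by_cases hlt : u.2.1 + 1 < m
      · exact Or.inr (H (u.1, ⟨u.2.1 + 1, hlt⟩) (by rw [grid_adj]; simp [Nat.dist]))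
      · left; omega
    have A4 : u.2.1 = 0 ∨
        Nat.dist u.1.1 v.1.1 + Nat.dist (u.2.1 - 1) v.2.1 ≤
        Nat.dist u.1.1 v.1.1 + Nat.dist u.2.1 v.2.1 := by
      by_cases hlt : 0 < u.2.1
      · exact Or.inr (H (u.1, ⟨u.2.1 - 1, by omega⟩)
          (by rw [grid_adj]; simp [Nat.dist]; omega))
      · left; omega
    simp only [Nat.dist] at A1 A2 A3 A4
    omega
  · rintro ⟨h1, h2⟩ z hz
    rw [grid_adj] at hz
    rw [grid_dist, grid_dist]
    have hz1 := z.1.2; have hz2 := z.2.2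
    simp only [Nat.dist] at *
    omega

set_option maxHeartbeats 1000000 in
/-- The strong resolving graph of the `n × m` grid (`n, m ≥ 2`) has exactly the two edges
`{x_{1,1}, x_{n,m}}` and `{x_{1,m}, x_{n,1}}`; consequently the strong metric dimension
of the grid is `2`. -/
theorem grid_srGraph_and_sdim {n m : ℕ} (hn : 2 ≤ n) (hm : 2 ≤ m) :
    (∀ a b : Fin n × Fin m, (srGraph (gridGraph n m)).Adj a b ↔
      (({a, b} : Set (Fin n × Fin m)) =
          {((⟨0, by omega⟩ : Fin n), (⟨0, by omega⟩ : Fin m)),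
           ((⟨n - 1, by omega⟩ : Fin n), (⟨m - 1, by omega⟩ : Fin m))} ∨
       ({a, b} : Set (Fin n × Fin m)) =
          {((⟨0, by omega⟩ : Fin n), (⟨m - 1, by omega⟩ : Fin m)),
           ((⟨n - 1, by omega⟩ : Fin n), (⟨0, by omega⟩ : Fin m))})) ∧
    IsLeast {c : ℕ | ∃ R : Finset (Fin n × Fin m),
      StrongResolvingSet (gridGraph n m) ↑R ∧ R.card = c} 2 := by
  set c00 : Fin n × Fin m := (⟨0, by omega⟩, ⟨0, by omega⟩) with hc00
  set cnm : Fin n × Fin m := (⟨n - 1, by omega⟩, ⟨m - 1, by omega⟩) with hcnm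
  set c0m : Fin n × Fin m := (⟨0, by omega⟩, ⟨m - 1, by omega⟩) with hc0m
  set cn0 : Fin n × Fin m := (⟨n - 1, by omega⟩, ⟨0, by omega⟩) with hcn0
  constructor
  · intro a b
    constructor
    · rintro ⟨hne, hab, hba⟩
      rw [maxDistant_iff hn hm] at hab hba
      have key : (a = c00 ∧ b = cnm) ∨ (a = cnm ∧ b = c00) ∨
          (a = c0m ∧ b = cn0) ∨ (a = cn0 ∧ b = c0m) := by
        simp only [hc00, hcnm, hc0m, hcn0, Prod.ext_iff, Fin.ext_iff]
        omega
      rcases key with ⟨rfl, rfl⟩ | ⟨rfl, rfl⟩ | ⟨rfl, rfl⟩ | ⟨rfl, rfl⟩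
      · exact Or.inl rfl
      · exact Or.inl (Set.pair_comm _ _)
      · exact Or.inr rfl
      · exact Or.inr (Set.pair_comm _ _)
    · intro h
      have adj1 : (srGraph (gridGraph n m)).Adj c00 cnm := by
        refine ⟨?_, ?_, ?_⟩
        · simp only [hc00, hcnm, ne_eq, Prod.ext_iff, Fin.ext_iff]; omega
        · rw [maxDistant_iff hn hm]; simp [hc00, hcnm]; try omega
        · rw [maxDistant_iff hn hm]; simp [hc00, hcnm]; try omega
      have adj2 : (srGraph (gridGraph n m)).Adj c0m cn0 := by
        refine ⟨?_, ?_, ?_⟩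
        · simp only [hc0m, hcn0, ne_eq, Prod.ext_iff, Fin.ext_iff]; omega
        · rw [maxDistant_iff hn hm]; simp [hc0m, hcn0]; try omega
        · rw [maxDistant_iff hn hm]; simp [hc0m, hcn0]; try omega
      rcases h with h | h <;> rw [Set.pair_eq_pair_iff] at h <;>
        rcases h with ⟨rfl, rfl⟩ | ⟨rfl, rfl⟩
      · exact adj1
      · exact adj1.symm
      · exact adj2
      · exact adj2.symm
  · constructor
    · -- membership: R = {c00, c0m} works
      refine ⟨{c00, c0m}, ?_, ?_⟩
      · intro u v huv
        have hu1 := u.1.2; have hu2 := u.2.2; have hv1 := v.1.2; have hv2 := v.2.2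
        rcases le_or_gt u.2.1 v.2.1 with h2 | h2
        · rcases le_or_gt u.1.1 v.1.1 with h1 | h1
          · refine ⟨c00, by simp, Or.inr ?_⟩
            simp only [grid_dist, hc00, Nat.dist]
            omega
          · refine ⟨c0m, by simp, Or.inl ?_⟩
            simp only [grid_dist, hc0m, Nat.dist]
            omega
        · rcases le_or_gt u.1.1 v.1.1 with h1 | h1
          · refine ⟨c0m, by simp, Or.inr ?_⟩
            simp only [grid_dist, hc0m, Nat.dist]
            omega
          · refine ⟨c00, by simp, Or.inl ?_⟩
            simp only [grid_dist, hc00, Nat.dist]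
            omega
      · rw [Finset.card_pair]
        simp only [hc00, hc0m, ne_eq, Prod.ext_iff, Fin.ext_iff]
        omega
    · rintro c ⟨R, hR, rfl⟩
      have hne1 : c00 ≠ cnm := by
        simp only [hc00, hcnm, ne_eq, Prod.ext_iff, Fin.ext_iff]; omega
      have hne2 : c0m ≠ cn0 := by
        simp only [hc0m, hcn0, ne_eq, Prod.ext_iff, Fin.ext_iff]; omega
      obtain ⟨w1, hw1R, hw1⟩ := hR c00 cnm hne1
      obtain ⟨w2, hw2R, hw2⟩ := hR c0m cn0 hne2
      have hw1' : w1 = c00 ∨ w1 = cnm := by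
        have h1 := w1.1.2; have h2 := w1.2.2
        rcases hw1 with h | h <;>
        · simp only [grid_dist, hc00, hcnm, Nat.dist] at h
          simp only [hc00, hcnm, Prod.ext_iff, Fin.ext_iff]
          omega
      have hw2' : w2 = c0m ∨ w2 = cn0 := by
        have h1 := w2.1.2; have h2 := w2.2.2
        rcases hw2 with h | h <;>
        · simp only [grid_dist, hc0m, hcn0, Nat.dist] at h
          simp only [hc0m, hcn0, Prod.ext_iff, Fin.ext_iff]
          omega
      have hne : w1 ≠ w2 := by
        rcases hw1' with rfl | rfl <;> rcases hw2' with rfl | rfl <;>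
          simp only [hc00, hcnm, hc0m, hcn0, ne_eq, Prod.ext_iff, Fin.ext_iff] <;> omega
      calc 2 = ({w1, w2} : Finset (Fin n × Fin m)).card := (Finset.card_pair hne).symm
        _ ≤ R.card := Finset.card_le_card (by
            intro x hx
            simp only [Finset.mem_insert, Finset.mem_singleton] at hx
            rcases hx with rfl | rfl
            · exact hw1R
            · exact hw2R)
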